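/- Let $q \geq 2$ be a prime power, $k \geq 1$, and $n \geq 3k+4$. Then $\left(D(k,q)\frac{q^{n-k-1}-1}{q^{2k+2}-1}+1\right)\frac{q^{n+1}-1}{q^{n}-1} < 2\left(\frac{q^{n-k}-1}{q^{k+1}-1}\right)+1$, where $D(k,q)=\frac{1}{\sqrt[8]{2}}q^{\frac{3k}{4}-\frac{k^2}{4}-\frac{1}{2}}(q-1)^{\frac{k^2}{4}-\frac{k}{4}+\frac{1}{2}}\sqrt{q^2+q+1}-1$. -/
import Mathlib


set_option maxHeartbeats 1000000 in
/-- For a prime power `q ≥ 2`, `k ≥ 1` and `n ≥ 3k+4`: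
`(D(k,q) * (q^(n-k-1)-1)/(q^(2k+2)-1) + 1) * (q^(n+1)-1)/(q^n-1) < 2 (q^(n-k)-1)/(q^(k+1)-1) + 1`,
where `D(k,q) = 2^(-1/8) q^(3k/4 - k²/4 - 1/2) (q-1)^(k²/4 - k/4 + 1/2) √(q²+q+1) - 1`. -/
theorem projective_bound_below_affine_bound
    (q k n : ℕ) (hq : 2 ≤ q) (hpp : IsPrimePow q) (hk : 1 ≤ k) (hn : 3 * k + 4 ≤ n) :
    (((2 : ℝ) ^ (-(1 : ℝ) / 8) *
        (q : ℝ) ^ ((3 * (k : ℝ)) / 4 - (k : ℝ) ^ 2 / 4 - 1 / 2) *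
        ((q : ℝ) - 1) ^ ((k : ℝ) ^ 2 / 4 - (k : ℝ) / 4 + 1 / 2) *
        Real.sqrt ((q : ℝ) ^ 2 + (q : ℝ) + 1) - 1) *
        (((q : ℝ) ^ (n - k - 1) - 1) / ((q : ℝ) ^ (2 * k + 2) - 1)) + 1) *
      (((q : ℝ) ^ (n + 1) - 1) / ((q : ℝ) ^ n - 1)) <
    2 * (((q : ℝ) ^ (n - k) - 1) / ((q : ℝ) ^ (k + 1) - 1)) + 1 := by
  obtain ⟨s, rfl⟩ : ∃ s, n = s + 3 * k + 4 := ⟨n - (3 * k + 4), by omega⟩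
  rw [show s + 3 * k + 4 - k - 1 = s + 2 * k + 3 from by omega,
      show s + 3 * k + 4 - k = s + 2 * k + 4 from by omega]
  set Q : ℝ := (q : ℝ) with hQdef
  have hQ : (2 : ℝ) ≤ Q := by rw [hQdef]; exact_mod_cast hq
  have hQ0 : (0 : ℝ) < Q := by linarith
  have hQ1 : (1 : ℝ) ≤ Q := by linarith
  have hkR : (1 : ℝ) ≤ (k : ℝ) := by exact_mod_cast hk
  have hpow1 : ∀ j : ℕ, (1 : ℝ) ≤ Q ^ j := fun j => by
    simpa using pow_le_pow_left₀ (by norm_num : (0:ℝ) ≤ 1) hQ1 j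
  have hpow2 : ∀ j : ℕ, (2 : ℝ) ^ j ≤ Q ^ j := fun j =>
    pow_le_pow_left₀ (by norm_num) hQ j
  have h16 : (16 : ℝ) ≤ Q ^ (2 * k + 2) := by
    calc (16 : ℝ) = 2 ^ 4 := by norm_num
      _ ≤ 2 ^ (2 * k + 2) := pow_le_pow_right₀ one_le_two (by omega)
      _ ≤ Q ^ (2 * k + 2) := hpow2 _
  have h4 : (4 : ℝ) ≤ Q ^ (k + 1) := by
    calc (4 : ℝ) = 2 ^ 2 := by norm_num
      _ ≤ 2 ^ (k + 1) := pow_le_pow_right₀ one_le_two (by omega)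
      _ ≤ Q ^ (k + 1) := hpow2 _
  have h128 : (128 : ℝ) ≤ Q ^ (s + 3 * k + 4) := by
    calc (128 : ℝ) = 2 ^ 7 := by norm_num
      _ ≤ 2 ^ (s + 3 * k + 4) := pow_le_pow_right₀ one_le_two (by omega)
      _ ≤ Q ^ (s + 3 * k + 4) := hpow2 _
  have hP8 : (8 : ℝ) ≤ Q ^ (s + k + 2) := by
    calc (8 : ℝ) = 2 ^ 3 := by norm_num
      _ ≤ 2 ^ (s + k + 2) := pow_le_pow_right₀ one_le_two (by omega)
      _ ≤ Q ^ (s + k + 2) := hpow2 _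
  have hden1 : (0 : ℝ) < Q ^ (2 * k + 2) - 1 := by linarith
  have hden2 : (0 : ℝ) < Q ^ (s + 3 * k + 4) - 1 := by linarith
  have hden3 : (0 : ℝ) < Q ^ (k + 1) - 1 := by linarith
  -- numeric constant bound
  have e1 : ((2 : ℝ) ^ (-(1 : ℝ) / 8)) ^ (8 : ℕ) = 1 / 2 := by
    rw [← Real.rpow_natCast ((2 : ℝ) ^ (-(1 : ℝ) / 8)) 8,
      ← Real.rpow_mul (by norm_num : (0:ℝ) ≤ 2)]
    rw [show (-(1 : ℝ) / 8 * ((8 : ℕ) : ℝ)) = -1 by push_cast; ring]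
    rw [Real.rpow_neg_one]
    norm_num
  have e2 : (Real.sqrt 3) ^ (8 : ℕ) = 81 := by
    rw [show (8 : ℕ) = 2 * 4 from rfl, pow_mul, Real.sq_sqrt (by norm_num : (0:ℝ) ≤ 3)]
    norm_num
  have e3 : (Real.sqrt 2) ^ (8 : ℕ) = 16 := by
    rw [show (8 : ℕ) = 2 * 4 from rfl, pow_mul, Real.sq_sqrt (by norm_num : (0:ℝ) ≤ 2)]
    norm_num
  have hconst : (2 : ℝ) ^ (-(1 : ℝ) / 8) * Real.sqrt 3 / Real.sqrt 2 ≤ 113 / 100 := by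
    refine le_of_pow_le_pow_left₀ (n := 8) (by norm_num) (by norm_num) ?_
    have : ((2 : ℝ) ^ (-(1 : ℝ) / 8) * Real.sqrt 3 / Real.sqrt 2) ^ (8 : ℕ) = 81 / 32 := by
      rw [div_pow, mul_pow, e1, e2, e3]; norm_num
    rw [this]; norm_num
  -- bound on D+1
  have hb : (0 : ℝ) ≤ (k : ℝ) ^ 2 / 4 - (k : ℝ) / 4 + 1 / 2 := by nlinarith
  have h1 : (Q - 1) ^ ((k : ℝ) ^ 2 / 4 - (k : ℝ) / 4 + 1 / 2)
      ≤ Q ^ ((k : ℝ) ^ 2 / 4 - (k : ℝ) / 4 + 1 / 2) :=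
    Real.rpow_le_rpow (by linarith) (by linarith) hb
  have h2 : Real.sqrt (Q ^ 2 + Q + 1) ≤ Real.sqrt 3 * Q := by
    calc Real.sqrt (Q ^ 2 + Q + 1) ≤ Real.sqrt (3 * Q ^ 2) :=
          Real.sqrt_le_sqrt (by nlinarith)
      _ = Real.sqrt 3 * Q := by
          rw [Real.sqrt_mul (by norm_num : (0:ℝ) ≤ 3), Real.sqrt_sq hQ0.le]
  have h3 : Q ^ ((3 * (k : ℝ)) / 4 - (k : ℝ) ^ 2 / 4 - 1 / 2)
      * Q ^ ((k : ℝ) ^ 2 / 4 - (k : ℝ) / 4 + 1 / 2) = Q ^ ((k : ℝ) / 2) := by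
    rw [← Real.rpow_add hQ0]
    congr 1
    ring
  have h4r : Q ^ ((k : ℝ) / 2) ≤ Q ^ k / Real.sqrt 2 := by
    rw [le_div_iff₀ (by positivity : (0:ℝ) < Real.sqrt 2)]
    have s3 : Real.sqrt 2 ≤ Q ^ ((1 : ℝ) / 2) := by
      rw [← Real.sqrt_eq_rpow]
      exact Real.sqrt_le_sqrt hQ
    calc Q ^ ((k : ℝ) / 2) * Real.sqrt 2 ≤ Q ^ ((k : ℝ) / 2) * Q ^ ((1 : ℝ) / 2) :=
          mul_le_mul_of_nonneg_left s3 (Real.rpow_nonneg hQ0.le _)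
      _ = Q ^ ((k : ℝ) / 2 + 1 / 2) := (Real.rpow_add hQ0 _ _).symm
      _ ≤ Q ^ ((k : ℝ)) := Real.rpow_le_rpow_of_exponent_le hQ1 (by linarith)
      _ = Q ^ k := Real.rpow_natCast Q k
  have nn0 : (0 : ℝ) ≤ (2 : ℝ) ^ (-(1 : ℝ) / 8)
      * Q ^ ((3 * (k : ℝ)) / 4 - (k : ℝ) ^ 2 / 4 - 1 / 2) := by positivity
  have nn1 : (0 : ℝ) ≤ (Q - 1) ^ ((k : ℝ) ^ 2 / 4 - (k : ℝ) / 4 + 1 / 2) :=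
    Real.rpow_nonneg (by linarith) _
  have hA : (2 : ℝ) ^ (-(1 : ℝ) / 8)
      * Q ^ ((3 * (k : ℝ)) / 4 - (k : ℝ) ^ 2 / 4 - 1 / 2)
      * (Q - 1) ^ ((k : ℝ) ^ 2 / 4 - (k : ℝ) / 4 + 1 / 2)
      * Real.sqrt (Q ^ 2 + Q + 1) ≤ 113 / 100 * (Q ^ k * Q) := by
    calc (2 : ℝ) ^ (-(1 : ℝ) / 8)
        * Q ^ ((3 * (k : ℝ)) / 4 - (k : ℝ) ^ 2 / 4 - 1 / 2)
        * (Q - 1) ^ ((k : ℝ) ^ 2 / 4 - (k : ℝ) / 4 + 1 / 2)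
        * Real.sqrt (Q ^ 2 + Q + 1)
        ≤ (2 : ℝ) ^ (-(1 : ℝ) / 8)
          * Q ^ ((3 * (k : ℝ)) / 4 - (k : ℝ) ^ 2 / 4 - 1 / 2)
          * Q ^ ((k : ℝ) ^ 2 / 4 - (k : ℝ) / 4 + 1 / 2)
          * (Real.sqrt 3 * Q) :=
        mul_le_mul (mul_le_mul_of_nonneg_left h1 nn0) h2 (Real.sqrt_nonneg _)
          (by positivity)
      _ = (2 : ℝ) ^ (-(1 : ℝ) / 8) * Q ^ ((k : ℝ) / 2) * (Real.sqrt 3 * Q) := by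
        rw [mul_assoc ((2 : ℝ) ^ (-(1 : ℝ) / 8)), h3]
      _ ≤ (2 : ℝ) ^ (-(1 : ℝ) / 8) * (Q ^ k / Real.sqrt 2) * (Real.sqrt 3 * Q) := by
        have : (0:ℝ) ≤ (2 : ℝ) ^ (-(1 : ℝ) / 8) := by positivity
        exact mul_le_mul_of_nonneg_right
          (mul_le_mul_of_nonneg_left h4r this) (by positivity)
      _ = (2 : ℝ) ^ (-(1 : ℝ) / 8) * Real.sqrt 3 / Real.sqrt 2 * (Q ^ k * Q) := by
        ring
      _ ≤ 113 / 100 * (Q ^ k * Q) :=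
        mul_le_mul_of_nonneg_right hconst (by positivity)
  have hAle : (2 : ℝ) ^ (-(1 : ℝ) / 8)
      * Q ^ ((3 * (k : ℝ)) / 4 - (k : ℝ) ^ 2 / 4 - 1 / 2)
      * (Q - 1) ^ ((k : ℝ) ^ 2 / 4 - (k : ℝ) / 4 + 1 / 2)
      * Real.sqrt (Q ^ 2 + Q + 1) - 1 ≤ 113 / 100 * (Q ^ k * Q) := by linarith
  -- bounds on the three fractions
  have hXnn : (0 : ℝ) ≤ (Q ^ (s + 2 * k + 3) - 1) / (Q ^ (2 * k + 2) - 1) :=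
    div_nonneg (by linarith [hpow1 (s + 2 * k + 3)]) hden1.le
  have hX : (Q ^ (s + 2 * k + 3) - 1) / (Q ^ (2 * k + 2) - 1) ≤ 16 / 15 * Q ^ (s + 1) := by
    rw [div_le_iff₀ hden1, show Q ^ (s + 2 * k + 3) = Q ^ (s + 1) * Q ^ (2 * k + 2) from by ring]
    linarith [mul_le_mul_of_nonneg_left h16 (by positivity : (0:ℝ) ≤ Q ^ (s + 1)),
      hpow1 (s + 1)]
  have hY : (Q ^ (s + 3 * k + 4 + 1) - 1) / (Q ^ (s + 3 * k + 4) - 1) ≤ 128 / 127 * Q := by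
    rw [div_le_iff₀ hden2, show Q ^ (s + 3 * k + 4 + 1) = Q * Q ^ (s + 3 * k + 4) from by ring]
    linarith [mul_le_mul_of_nonneg_left h128 (by linarith : (0:ℝ) ≤ Q)]
  have hR : Q ^ (s + k + 3) - 1 ≤ (Q ^ (s + 2 * k + 4) - 1) / (Q ^ (k + 1) - 1) := by
    rw [le_div_iff₀ hden3, show Q ^ (s + 2 * k + 4) = Q ^ (s + k + 3) * Q ^ (k + 1) from by ring]
    linarith [hpow1 (s + k + 3), hpow1 (k + 1)]
  have hRnn : (0 : ℝ) ≤ (Q ^ (s + 2 * k + 4) - 1) / (Q ^ (k + 1) - 1) :=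
    div_nonneg (by linarith [hpow1 (s + 2 * k + 4)]) hden3.le
  -- final numeric bound
  have hfinal : (113 / 100 * (Q ^ k * Q) * (16 / 15 * Q ^ (s + 1)) + 1) * (128 / 127 * Q)
      < 2 * (Q ^ (s + k + 3) - 1) + 1 := by
    linarith [show Q ^ k * Q * Q ^ (s + 1) * Q = Q ^ (s + k + 2) * Q from by ring,
      show Q ^ (s + k + 3) = Q ^ (s + k + 2) * Q from by ring,
      mul_le_mul_of_nonneg_right hP8 hQ0.le, hQ]
  rcases le_or_gt 0 (((2 : ℝ) ^ (-(1 : ℝ) / 8)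
      * Q ^ ((3 * (k : ℝ)) / 4 - (k : ℝ) ^ 2 / 4 - 1 / 2)
      * (Q - 1) ^ ((k : ℝ) ^ 2 / 4 - (k : ℝ) / 4 + 1 / 2)
      * Real.sqrt (Q ^ 2 + Q + 1) - 1)
      * ((Q ^ (s + 2 * k + 3) - 1) / (Q ^ (2 * k + 2) - 1)) + 1) with hpos | hneg
  · have hEX : ((2 : ℝ) ^ (-(1 : ℝ) / 8)
        * Q ^ ((3 * (k : ℝ)) / 4 - (k : ℝ) ^ 2 / 4 - 1 / 2)
        * (Q - 1) ^ ((k : ℝ) ^ 2 / 4 - (k : ℝ) / 4 + 1 / 2)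
        * Real.sqrt (Q ^ 2 + Q + 1) - 1)
        * ((Q ^ (s + 2 * k + 3) - 1) / (Q ^ (2 * k + 2) - 1))
        ≤ 113 / 100 * (Q ^ k * Q) * (16 / 15 * Q ^ (s + 1)) :=
      le_trans (mul_le_mul_of_nonneg_right hAle hXnn)
        (mul_le_mul_of_nonneg_left hX (by positivity))
    calc (((2 : ℝ) ^ (-(1 : ℝ) / 8)
          * Q ^ ((3 * (k : ℝ)) / 4 - (k : ℝ) ^ 2 / 4 - 1 / 2)
          * (Q - 1) ^ ((k : ℝ) ^ 2 / 4 - (k : ℝ) / 4 + 1 / 2)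
          * Real.sqrt (Q ^ 2 + Q + 1) - 1)
          * ((Q ^ (s + 2 * k + 3) - 1) / (Q ^ (2 * k + 2) - 1)) + 1)
          * ((Q ^ (s + 3 * k + 4 + 1) - 1) / (Q ^ (s + 3 * k + 4) - 1))
        ≤ (((2 : ℝ) ^ (-(1 : ℝ) / 8)
          * Q ^ ((3 * (k : ℝ)) / 4 - (k : ℝ) ^ 2 / 4 - 1 / 2)
          * (Q - 1) ^ ((k : ℝ) ^ 2 / 4 - (k : ℝ) / 4 + 1 / 2)
          * Real.sqrt (Q ^ 2 + Q + 1) - 1)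
          * ((Q ^ (s + 2 * k + 3) - 1) / (Q ^ (2 * k + 2) - 1)) + 1)
          * (128 / 127 * Q) := mul_le_mul_of_nonneg_left hY hpos
      _ ≤ (113 / 100 * (Q ^ k * Q) * (16 / 15 * Q ^ (s + 1)) + 1) * (128 / 127 * Q) := by
          apply mul_le_mul_of_nonneg_right _ (by positivity)
          linarith
      _ < 2 * (Q ^ (s + k + 3) - 1) + 1 := hfinal
      _ ≤ 2 * ((Q ^ (s + 2 * k + 4) - 1) / (Q ^ (k + 1) - 1)) + 1 := by linarith
  · have hY0 : (0 : ℝ) < (Q ^ (s + 3 * k + 4 + 1) - 1) / (Q ^ (s + 3 * k + 4) - 1) := by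
      apply div_pos _ hden2
      have h2le : (2 : ℝ) ≤ Q ^ (s + 3 * k + 4 + 1) :=
        hQ.trans (le_self_pow₀ hQ1 (Nat.succ_ne_zero _))
      linarith
    have := mul_neg_of_neg_of_pos hneg hY0
    linarith
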